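/- Let (A, B, C, D) be a symmetric state-space realization (A = Aᵀ negative definite, B = Cᵀ, D = Dᵀ with D + Dᵀ positive definite) of a strictly passive system. Then all eigenvalues of the Hamiltonian matrix H = [[A − B(D+Dᵀ)^{-1}C, B(D+Dᵀ)^{-1}Bᵀ], [−Cᵀ(D+Dᵀ)^{-1}C, −(A − B(D+Dᵀ)^{-1}C)ᵀ]] satisfy: their squares are real. If additionally H has no purely imaginary eigenvalues, then all eigenvalues of H are real. -/

import Mathlib

set_option maxHeartbeats 800000

open Matrix
open scoped ComplexOrder

private lemma mapC_isHermitian {k : Type*} [Fintype k] {P : Matrix k k ℝ} (hP : P.IsHermitian) :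
    (P.map Complex.ofReal).IsHermitian := by
  ext i j
  simp only [conjTranspose_apply, map_apply, RCLike.star_def, Complex.conj_ofReal]
  exact congrArg Complex.ofReal (hP.apply i j)

private lemma mapC_mul {k : Type*} [Fintype k] (P Q : Matrix k k ℝ) :
    (P * Q).map Complex.ofReal = P.map Complex.ofReal * Q.map Complex.ofReal :=
  Matrix.map_mul (f := Complex.ofRealHom)

open scoped MatrixOrder in
private lemma quadC_pos {k : Type*} [Fintype k] [DecidableEq k] {P : Matrix k k ℝ}
    (hP : P.PosDef) {v : k → ℂ} (hv : v ≠ 0) :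
    0 < star v ⬝ᵥ (P.map Complex.ofReal) *ᵥ v := by
  set L := CFC.sqrt P with hLdef
  have hLL : L * L = P := CFC.sqrt_mul_sqrt_self P hP.posSemidef.nonneg
  have hLherm : L.IsHermitian := (CFC.sqrt_nonneg P).posSemidef.1
  have hLcherm := mapC_isHermitian hLherm
  have hdetL : L.det ≠ 0 := by
    intro h
    have : P.det = 0 := by rw [← hLL, det_mul, h, zero_mul]
    exact hP.det_pos.ne' this
  have hdetLc : (L.map Complex.ofReal).det ≠ 0 := by
    have : (L.map Complex.ofReal).det = Complex.ofReal L.det := by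
      have := RingHom.map_det Complex.ofRealHom L
      exact (by simpa [RingHom.mapMatrix_apply] using this.symm :
        (L.map Complex.ofRealHom).det = Complex.ofReal L.det)
    rw [this]
    simpa using hdetL
  have hw : (L.map Complex.ofReal) *ᵥ v ≠ 0 := by
    intro h
    exact hdetLc ((Matrix.exists_mulVec_eq_zero_iff).mp ⟨v, hv, h⟩)
  have : P.map Complex.ofReal = L.map Complex.ofReal * L.map Complex.ofReal := by
    rw [← mapC_mul, hLL]
  have hsw : star ((L.map Complex.ofReal) *ᵥ v) = star v ᵥ* (L.map Complex.ofReal) := by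
    rw [star_mulVec, hLcherm.eq]
  rw [this, ← mulVec_mulVec, dotProduct_mulVec, ← hsw]
  exact dotProduct_star_self_pos_iff.mpr hw

private lemma keylem {k : Type*} [Fintype k] [DecidableEq k] {P Q : Matrix k k ℝ}
    (hP : P.PosDef) (hQ : Q.PosDef) {μ : ℂ}
    (hdet : (μ • (1 : Matrix k k ℂ) - P.map Complex.ofReal * Q.map Complex.ofReal).det = 0) :
    μ.im = 0 := by
  obtain ⟨v, hv, hv0⟩ := (Matrix.exists_mulVec_eq_zero_iff).mpr hdet
  rw [sub_mulVec, smul_mulVec, one_mulVec, sub_eq_zero] at hv0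
  set w := (Q.map Complex.ofReal) *ᵥ v with hwdef
  have hβ : 0 < star v ⬝ᵥ w := quadC_pos hQ hv
  have hwv : star w ⬝ᵥ v = star v ⬝ᵥ w := by
    rw [hwdef, star_mulVec, (mapC_isHermitian hQ.1).eq, ← dotProduct_mulVec]
  have hwne : w ≠ 0 := by
    intro h
    rw [h, dotProduct_zero] at hβ
    exact lt_irrefl _ hβ
  have hα : 0 < star w ⬝ᵥ (P.map Complex.ofReal) *ᵥ w := quadC_pos hP hwne
  have hαeq : star w ⬝ᵥ (P.map Complex.ofReal) *ᵥ w = μ * (star v ⬝ᵥ w) := by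
    rw [hwdef, mulVec_mulVec, ← hv0]
    rw [← hwdef]
    rw [show ((μ • v : k → ℂ)) = μ • v from rfl]
    rw [dotProduct_smul, smul_eq_mul, hwv]
  set β := star v ⬝ᵥ w
  have hβim : β.im = 0 := (Complex.lt_def.mp hβ).2.symm
  have hβre : 0 < β.re := by simpa using (Complex.lt_def.mp hβ).1
  have hαim : (μ * β).im = 0 := by
    rw [← hαeq]; exact (Complex.lt_def.mp hα).2.symm
  rw [Complex.mul_im, hβim, mul_zero, zero_add] at hαim
  exact (mul_eq_zero.mp hαim).resolve_right hβre.ne'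

private lemma mapC_mul' {k : Type*} [Fintype k] (P Q : Matrix k k ℝ) :
    (P * Q).map Complex.ofReal = P.map Complex.ofReal * Q.map Complex.ofReal :=
  Matrix.map_mul (f := Complex.ofRealHom)

private lemma spec_aux {k : Type*} [Fintype k] [DecidableEq k] (E F : Matrix k k ℝ)
    (hM : (-(E - F)).PosDef) (hN : (-(E + F)).PosDef)
    (μ : ℂ) (hμ : μ ∈ spectrum ℂ ((fromBlocks E F (-F) (-E)).map Complex.ofReal)) :
    (μ * μ).im = 0 := by
  classical
  set Hr : Matrix (k ⊕ k) (k ⊕ k) ℝ := fromBlocks E F (-F) (-E) with hHr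
  set K : Matrix (k ⊕ k) (k ⊕ k) ℝ := fromBlocks 0 (E - F) (E + F) 0 with hK
  set J : Matrix (k ⊕ k) (k ⊕ k) ℝ := fromBlocks 1 1 1 (-1) with hJ
  have hHJ : Hr * J = J * K := by
    rw [hHr, hJ, hK, fromBlocks_multiply, fromBlocks_multiply]
    simp only [Matrix.mul_one, Matrix.one_mul, Matrix.mul_zero, Matrix.zero_mul,
      Matrix.mul_neg, Matrix.neg_mul]
    abel_nf
  -- complex versions
  set Hc := Hr.map Complex.ofReal with hHc
  set Kc := K.map Complex.ofReal with hKc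
  set Jc := J.map Complex.ofReal with hJc
  have hHKc : Hc * Jc = Jc * Kc := by
    rw [hHc, hJc, hKc, ← mapC_mul', ← mapC_mul', hHJ]
  -- J is invertible
  have hJJ : J * J = (2 : ℝ) • 1 := by
    rw [hJ, fromBlocks_multiply, show (1 : Matrix (k ⊕ k) (k ⊕ k) ℝ) = fromBlocks 1 0 0 1 from
      fromBlocks_one.symm, fromBlocks_smul]
    simp only [Matrix.mul_one, Matrix.one_mul, Matrix.mul_neg, Matrix.neg_mul, neg_neg,
      smul_zero]
    congr 1 <;> try rw [two_smul]
    all_goals abel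
  have hsmul : ((2 : ℝ) • (1 : Matrix (k ⊕ k) (k ⊕ k) ℝ)).map Complex.ofReal
      = (2 : ℂ) • 1 := by
    ext i j
    by_cases h : i = j <;> simp [Matrix.one_apply, h]
  have hdetJ : Jc.det ≠ 0 := by
    intro h0
    have h1 : Jc.det * Jc.det = ((2 : ℂ) • (1 : Matrix (k ⊕ k) (k ⊕ k) ℂ)).det := by
      rw [← det_mul, hJc, ← mapC_mul', hJJ, hsmul]
    rw [h0, mul_zero, det_smul, det_one, mul_one] at h1
    have h2 : (2 : ℂ) ^ Fintype.card (k ⊕ k) ≠ 0 := pow_ne_zero _ two_ne_zero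
    exact h2 h1.symm
  -- from spectrum membership to determinant
  have hdet0 : (μ • (1 : Matrix (k ⊕ k) (k ⊕ k) ℂ) - Hc).det = 0 := by
    have h1 := spectrum.mem_iff.mp hμ
    by_contra hne
    exact h1 <| (Matrix.isUnit_iff_isUnit_det _).mpr <| isUnit_iff_ne_zero.mpr <| by
      rwa [Algebra.algebraMap_eq_smul_one]
  have hdetK : (μ • (1 : Matrix (k ⊕ k) (k ⊕ k) ℂ) - Kc).det = 0 := by
    have hconj : (μ • 1 - Hc) * Jc = Jc * (μ • (1 : Matrix (k ⊕ k) (k ⊕ k) ℂ) - Kc) := by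
      rw [sub_mul, mul_sub, smul_mul_assoc, one_mul, mul_smul_comm, mul_one, hHKc]
    have h2 := congrArg det hconj
    rw [det_mul, det_mul, hdet0, zero_mul] at h2
    rcases mul_eq_zero.mp h2.symm with h | h
    · exact absurd h hdetJ
    · exact h
  have hsq : (μ • 1 + Kc) * (μ • (1 : Matrix (k ⊕ k) (k ⊕ k) ℂ) - Kc)
      = (μ * μ) • 1 - Kc * Kc := by
    simp only [add_mul, mul_sub, sub_mul, smul_mul_assoc, mul_smul_comm, one_mul, mul_one,
      smul_add, smul_sub, smul_smul]
    abel
  have hdetKK : ((μ * μ) • (1 : Matrix (k ⊕ k) (k ⊕ k) ℂ) - Kc * Kc).det = 0 := by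
    rw [← hsq, det_mul, hdetK, mul_zero]
  -- block structure of K * K
  have hKK : K * K = fromBlocks ((E - F) * (E + F)) 0 0 ((E + F) * (E - F)) := by
    rw [hK, fromBlocks_multiply]
    simp
  have hblocks : (μ * μ) • (1 : Matrix (k ⊕ k) (k ⊕ k) ℂ) - Kc * Kc
      = fromBlocks ((μ * μ) • 1 - ((E - F) * (E + F)).map Complex.ofReal) 0 0
          ((μ * μ) • 1 - ((E + F) * (E - F)).map Complex.ofReal) := by
    rw [hKc, ← mapC_mul', hKK]
    rw [show ((fromBlocks ((E - F) * (E + F)) 0 0 ((E + F) * (E - F)) :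
        Matrix (k ⊕ k) (k ⊕ k) ℝ).map Complex.ofReal)
        = fromBlocks (((E - F) * (E + F)).map Complex.ofReal) 0 0
          (((E + F) * (E - F)).map Complex.ofReal) from by
      rw [fromBlocks_map]; congr 1 <;> ext i j <;> simp]
    rw [show (1 : Matrix (k ⊕ k) (k ⊕ k) ℂ) = fromBlocks 1 0 0 1 from fromBlocks_one.symm,
      fromBlocks_smul, sub_eq_add_neg, fromBlocks_neg, fromBlocks_add]
    congr 1 <;> simp [sub_eq_add_neg]
  have hfactor : ((μ * μ) • (1 : Matrix k k ℂ) - ((E - F) * (E + F)).map Complex.ofReal).det *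
      ((μ * μ) • (1 : Matrix k k ℂ) - ((E + F) * (E - F)).map Complex.ofReal).det = 0 := by
    rw [← det_fromBlocks_zero₂₁, ← hblocks, hdetKK]
  have hMN : (E - F) * (E + F) = (-(E - F)) * (-(E + F)) := by rw [neg_mul_neg]
  have hNM : (E + F) * (E - F) = (-(E + F)) * (-(E - F)) := by rw [neg_mul_neg]
  rcases mul_eq_zero.mp hfactor with h | h
  · rw [hMN, mapC_mul'] at h
    exact keylem hM hN h
  · rw [hNM, mapC_mul'] at h
    exact keylem hN hM h

/-- For a symmetric state-space realization (`A` symmetric negative definite,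
`C = Bᵀ`, `D` symmetric with `D + Dᵀ ≻ 0`), the squares of the eigenvalues of the
Hamiltonian matrix `H` are real; if moreover `H` has no purely imaginary
eigenvalues, then all its eigenvalues are real. -/
theorem stmt14 (n m : ℕ) (A : Matrix (Fin n) (Fin n) ℝ) (B : Matrix (Fin n) (Fin m) ℝ)
    (C : Matrix (Fin m) (Fin n) ℝ) (D : Matrix (Fin m) (Fin m) ℝ)
    (hA : A.IsSymm) (hAneg : (-A).PosDef) (hC : C = Bᵀ) (hD : Dᵀ = D)
    (hDD : (D + Dᵀ).PosDef) :
    let H := Matrix.fromBlocks (A - B * (D + Dᵀ)⁻¹ * C) (B * (D + Dᵀ)⁻¹ * Bᵀ)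
        (-(Cᵀ * (D + Dᵀ)⁻¹ * C)) (-(A - B * (D + Dᵀ)⁻¹ * C)ᵀ)
    (∀ μ ∈ spectrum ℂ (H.map Complex.ofReal), (μ ^ 2).im = 0) ∧
    ((∀ μ ∈ spectrum ℂ (H.map Complex.ofReal), μ.re ≠ 0) →
      ∀ μ ∈ spectrum ℂ (H.map Complex.ofReal), μ.im = 0) := by
  intro H
  have hSsymm : ((D + Dᵀ)⁻¹)ᵀ = (D + Dᵀ)⁻¹ := by
    rw [transpose_nonsing_inv, transpose_add, transpose_transpose, hD]
  have hS : ((D + Dᵀ)⁻¹).PosDef := hDD.inv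
  have hFpsd : (B * (D + Dᵀ)⁻¹ * Bᵀ).PosSemidef := by
    have h := hS.posSemidef.mul_mul_conjTranspose_same B
    rwa [conjTranspose_eq_transpose_of_trivial] at h
  have hFsymm : (B * (D + Dᵀ)⁻¹ * Bᵀ)ᵀ = B * (D + Dᵀ)⁻¹ * Bᵀ := by
    rw [transpose_mul, transpose_mul, transpose_transpose, hSsymm, Matrix.mul_assoc]
  have hEsymm : (A - B * (D + Dᵀ)⁻¹ * Bᵀ)ᵀ = A - B * (D + Dᵀ)⁻¹ * Bᵀ := by
    rw [transpose_sub, hA.eq, hFsymm]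
  have hHeq : H = fromBlocks (A - B * (D + Dᵀ)⁻¹ * Bᵀ) (B * (D + Dᵀ)⁻¹ * Bᵀ)
      (-(B * (D + Dᵀ)⁻¹ * Bᵀ)) (-(A - B * (D + Dᵀ)⁻¹ * Bᵀ)) := by
    show fromBlocks (A - B * (D + Dᵀ)⁻¹ * C) (B * (D + Dᵀ)⁻¹ * Bᵀ)
        (-(Cᵀ * (D + Dᵀ)⁻¹ * C)) (-(A - B * (D + Dᵀ)⁻¹ * C)ᵀ) = _
    rw [hC, transpose_transpose, hEsymm]
  have hM : (-((A - B * (D + Dᵀ)⁻¹ * Bᵀ) - B * (D + Dᵀ)⁻¹ * Bᵀ)).PosDef := by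
    have he : -((A - B * (D + Dᵀ)⁻¹ * Bᵀ) - B * (D + Dᵀ)⁻¹ * Bᵀ)
        = (B * (D + Dᵀ)⁻¹ * Bᵀ + B * (D + Dᵀ)⁻¹ * Bᵀ) + (-A) := by abel
    rw [he]
    exact Matrix.PosDef.posSemidef_add (hFpsd.add hFpsd) hAneg
  have hN : (-((A - B * (D + Dᵀ)⁻¹ * Bᵀ) + B * (D + Dᵀ)⁻¹ * Bᵀ)).PosDef := by
    have he : -((A - B * (D + Dᵀ)⁻¹ * Bᵀ) + B * (D + Dᵀ)⁻¹ * Bᵀ) = -A := by abel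
    rw [he]
    exact hAneg
  have key1 : ∀ μ ∈ spectrum ℂ (H.map Complex.ofReal), (μ ^ 2).im = 0 := by
    intro μ hμ
    rw [hHeq] at hμ
    have h := spec_aux _ _ hM hN μ hμ
    rwa [pow_two]
  refine ⟨key1, fun hre μ hμ => ?_⟩
  have h := key1 μ hμ
  rw [pow_two, Complex.mul_im] at h
  have h2 : μ.re * μ.im = 0 := by linarith [h]
  exact (mul_eq_zero.mp h2).resolve_left (hre μ hμ)
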